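/- Let w be an extended affine permutation with Shi poset of width m, and let d : B_w → ℤ be any proper numbering of the balls of w. Then for every ball b, d(b - (n,n)) ≥ d(b) - m. -/

import Mathlib

/-- The Shi relation `i ≤_S j` for an extended affine permutation `w`. -/
def ShiLe (n : ℕ) (w : ℤ → ℤ) (i j : ℤ) : Prop :=
  i = j ∨ (j < i ∧ w i < w j) ∨ w i + n < w j

/-- An antichain of the Shi poset of `w` on `{1,…,n}`. -/
def IsShiAntichain (n : ℕ) (w : ℤ → ℤ) (A : Finset ℤ) : Prop :=
  A ⊆ Finset.Icc (1 : ℤ) n ∧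
  ∀ i ∈ A, ∀ j ∈ A, i ≠ j → ¬ ShiLe n w i j ∧ ¬ ShiLe n w j i

/-- `m` is the width (maximal antichain size) of the Shi poset of `w`. -/
def IsShiWidth (n : ℕ) (w : ℤ → ℤ) (m : ℕ) : Prop :=
  (∃ A : Finset ℤ, IsShiAntichain n w A ∧ A.card = m) ∧
  ∀ A : Finset ℤ, IsShiAntichain n w A → A.card ≤ m

/-- A proper numbering of the balls `(i, w i)` of `w`, indexed by rows: monotone
(strictly northwest implies strictly smaller) and continuous (some ball weakly
northwest is numbered one less). -/
def IsProper (w d : ℤ → ℤ) : Prop :=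
  (∀ i j : ℤ, i < j → w i < w j → d i < d j) ∧
  (∀ j : ℤ, ∃ i : ℤ, i ≤ j ∧ w i ≤ w j ∧ d i = d j - 1)

/-- An `(n,n)`-invariant southeast chain of balls of `w` (identified by rows). -/
def IsChannelChain (n : ℕ) (w : ℤ → ℤ) (C : Set ℤ) : Prop :=
  (∀ i : ℤ, i ∈ C ↔ i + n ∈ C) ∧ ∀ i ∈ C, ∀ j ∈ C, i < j → w i < w j

/-- The density of such a chain: number of `(n,n)`-translate classes. -/
noncomputable def chDensity (n : ℕ) (C : Set ℤ) : ℕ := (C ∩ Set.Icc (1 : ℤ) n).ncard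

/-- A channel: an `(n,n)`-invariant southeast chain of maximal density. -/
def IsChannel (n : ℕ) (w : ℤ → ℤ) (C : Set ℤ) : Prop :=
  IsChannelChain n w C ∧
  ∀ D : Set ℤ, IsChannelChain n w D → chDensity n D ≤ chDensity n C

/-- `C₁` is southwest of `C₂`: every element of `C₁` has an element of `C₂`
weakly northeast of it. -/
def ChannelSW (n : ℕ) (w : ℤ → ℤ) (C₁ C₂ : Set ℤ) : Prop :=
  ∀ i ∈ C₁, ∃ j ∈ C₂, j ≤ i ∧ w i ≤ w j

private lemma wper_mul {n : ℕ} {w : ℤ → ℤ} (hper : ∀ i : ℤ, w (i + n) = w i + n) :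
    ∀ (q : ℤ) (i : ℤ), w (i + q * n) = w i + q * n := by
  intro q
  induction q using Int.induction_on with
  | zero => simp
  | succ k ih =>
      intro i
      have h1 : i + ((k : ℤ) + 1) * n = (i + k * n) + n := by ring
      rw [h1, hper, ih]; ring
  | pred k ih =>
      intro i
      have h1 : i + (-(k : ℤ) - 1) * n + n = i + (-(k:ℤ)) * n := by ring
      have h2 := hper (i + (-(k : ℤ) - 1) * n)
      rw [h1, ih] at h2
      linarith

/-- representative in `[1,n]` of the residue class of `i` mod `n`. -/
private def resid (n : ℕ) (i : ℤ) : ℤ := (i - 1) % (n : ℤ) + 1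

private lemma resid_mem {n : ℕ} (hn : 0 < n) (i : ℤ) : 1 ≤ resid n i ∧ resid n i ≤ n := by
  have hnZ : (0:ℤ) < (n:ℤ) := by exact_mod_cast hn
  have h1 := Int.emod_nonneg (i - 1) (by exact_mod_cast hn.ne' : (n:ℤ) ≠ 0)
  have h2 := Int.emod_lt_of_pos (i - 1) hnZ
  unfold resid
  omega

private lemma resid_rep {n : ℕ} (i : ℤ) : ∃ q : ℤ, i = resid n i + q * n := by
  refine ⟨(i - 1) / n, ?_⟩
  have := Int.mul_ediv_add_emod (i - 1) (n : ℤ)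
  unfold resid
  linarith

/-- Key incomparability lemma: two balls in strict southeast position with both
coordinate differences in `(0,n)` have distinct, Shi-incomparable residues. -/
private lemma alpha {n : ℕ} (hn : 0 < n) {w : ℤ → ℤ}
    (hper : ∀ i : ℤ, w (i + n) = w i + n)
    (u v : ℤ) (h1 : 0 < v - u) (h2 : v - u < n)
    (h3 : 0 < w v - w u) (h4 : w v - w u < n) :
    resid n u ≠ resid n v ∧ ¬ ShiLe n w (resid n u) (resid n v) ∧
      ¬ ShiLe n w (resid n v) (resid n u) := by
  have hnZ : (0:ℤ) < (n:ℤ) := by exact_mod_cast hn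
  obtain ⟨a, ha⟩ := resid_rep (n := n) u
  obtain ⟨b, hb⟩ := resid_rep (n := n) v
  set i := resid n u with hi
  set j := resid n v with hj
  obtain ⟨hi1, hi2⟩ := resid_mem hn u
  obtain ⟨hj1, hj2⟩ := resid_mem hn v
  rw [← hi] at hi1 hi2
  rw [← hj] at hj1 hj2
  have hwu : w u = w i + a * n := by
    have := wper_mul hper a i; rw [← ha] at this; linarith
  have hwv : w v = w j + b * n := by
    have := wper_mul hper b j; rw [← hb] at this; linarith
  set δ : ℤ := b - a with hδ
  have hji : j - i = (v - u) - δ * n := by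
    have : v - u = (j - i) + δ * n := by rw [ha, hb]; ring
    linarith
  have hwji : w j - w i = (w v - w u) - δ * n := by
    have : w v - w u = (w j - w i) + δ * n := by rw [hwu, hwv]; ring
    linarith
  have hδ0 : δ = 0 ∨ δ = 1 := by
    have hA : δ * n ≤ 2 * n - 2 := by nlinarith
    have hB : (1:ℤ) - n ≤ δ * n := by nlinarith
    have : δ ≤ 1 := by nlinarith
    have : 0 ≤ δ := by nlinarith
    omega
  rcases hδ0 with h0 | h0
  · rw [h0] at hji hwji
    simp at hji hwji
    have hij : i < j := by linarith
    have hwij : w i < w j := by linarith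
    have hwgap : w j - w i < n := by linarith
    refine ⟨by omega, ?_, ?_⟩
    · rintro (h | ⟨hlt, hwlt⟩ | h) <;> linarith
    · rintro (h | ⟨hlt, hwlt⟩ | h) <;> linarith
  · rw [h0] at hji hwji
    simp at hji hwji
    have hij : j < i := by linarith
    have hwij : w j < w i := by linarith
    have hwgap : w i - w j < n := by linarith
    refine ⟨by omega, ?_, ?_⟩
    · rintro (h | ⟨hlt, hwlt⟩ | h) <;> linarith
    · rintro (h | ⟨hlt, hwlt⟩ | h) <;> linarith

set_option maxHeartbeats 1000000 in
theorem stmt4 (n : ℕ) (hn : 0 < n) (w : ℤ → ℤ)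
    (hbij : Function.Bijective w) (hper : ∀ i : ℤ, w (i + n) = w i + n)
    (m : ℕ) (hm : IsShiWidth n w m)
    (d : ℤ → ℤ) (hd : IsProper w d) :
    ∀ i : ℤ, d i - m ≤ d (i - n) := by
  classical
  by_contra hgoal
  push_neg at hgoal
  obtain ⟨i₀, hi₀⟩ := hgoal
  obtain ⟨hmono, hcont⟩ := hd
  choose wit hwle hwwle hwd using hcont
  have hnZ : (0:ℤ) < (n:ℤ) := by exact_mod_cast hn
  have winj : Function.Injective w := hbij.injective
  have wsub : ∀ i : ℤ, w (i - n) = w i - n := by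
    intro i
    have h := hper (i - n)
    rw [show i - (n:ℤ) + n = i by ring] at h
    linarith
  have hwit_ne : ∀ j, wit j ≠ j := by
    intro j hjeq
    have := hwd j
    rw [hjeq] at this
    omega
  have hwit_lt : ∀ j, wit j < j := fun j => lt_of_le_of_ne (hwle j) (hwit_ne j)
  have hwit_wlt : ∀ j, w (wit j) < w j := by
    intro j
    exact lt_of_le_of_ne (hwwle j) (fun hww => hwit_ne j (winj hww))
  have hD1 : ∀ y : ℤ, 1 ≤ d y - d (y - n) := by
    intro y
    have h1 : y - (n:ℤ) < y := by linarith
    have h2 : w (y - n) < w y := by rw [wsub]; linarith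
    have := hmono _ _ h1 h2
    linarith
  have hfact1 : ∀ j : ℤ, d j - d (j - n) ≤ d (wit j) - d (wit j - n) := by
    intro j
    have h1 : wit j - (n:ℤ) < j - n := by have := hwit_lt j; linarith
    have h2 : w (wit j - n) < w (j - n) := by
      rw [wsub, wsub]; have := hwit_wlt j; linarith
    have h3 := hmono _ _ h1 h2
    have h4 := hwd j
    linarith
  have hiter : ∀ (y : ℤ) (t : ℕ), wit^[t+1] y = wit (wit^[t] y) := by
    intro y t; exact Function.iterate_succ_apply' wit t y
  have hpd : ∀ (y : ℤ) (t : ℕ), d (wit^[t] y) = d y - t := by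
    intro y t
    induction t with
    | zero => simp
    | succ k ih => rw [hiter, hwd, ih]; push_cast; ring
  have hple : ∀ (y : ℤ) (k : ℕ), wit^[k] y ≤ y - k ∧ w (wit^[k] y) ≤ w y - k := by
    intro y k
    induction k with
    | zero => simp
    | succ k ih =>
        rw [hiter]
        constructor
        · have := hwit_lt (wit^[k] y); push_cast; push_cast at ih; omega
        · have := hwit_wlt (wit^[k] y); push_cast; push_cast at ih; omega
  have hDn : ∀ y : ℤ, d y - d (y - n) ≤ n := by
    intro y
    have h := hple y n
    have hdv := hpd y n
    by_cases hceq : wit^[n] y = y - n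
    · rw [hceq] at hdv; omega
    · have hlt : wit^[n] y < y - n := lt_of_le_of_ne h.1 hceq
      have hwlt : w (wit^[n] y) < w (y - n) := by
        rw [wsub]
        refine lt_of_le_of_ne h.2 (fun hww => hceq (winj ?_))
        rw [hww, wsub]
      have := hmono _ _ hlt hwlt
      omega
  -- the maximal value Δ of y ↦ d y - d (y - n)
  set P : ℕ → Prop := fun k => ∃ y : ℤ, d y - d (y - n) = (k : ℤ) with hP
  have hP0 : P (d 0 - d (0 - (n:ℤ))).toNat := by
    refine ⟨0, ?_⟩
    rw [Int.toNat_of_nonneg (by linarith [hD1 0])]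
  have hble : (d 0 - d (0 - (n:ℤ))).toNat ≤ n := by
    have h1 := hDn 0
    have h2 := hD1 0
    omega
  set Δ : ℕ := Nat.findGreatest P n with hΔ
  have hPΔ : P Δ := Nat.findGreatest_spec hble hP0
  have hub : ∀ y : ℤ, d y - d (y - n) ≤ (Δ : ℤ) := by
    intro y
    by_contra hc
    push_neg at hc
    have h1 := hDn y
    have h2 := hD1 y
    have h3 : Δ < (d y - d (y - n)).toNat := by omega
    have h4 : (d y - d (y - n)).toNat ≤ n := by omega
    refine Nat.findGreatest_is_greatest h3 h4 ?_
    exact ⟨y, by rw [Int.toNat_of_nonneg (by omega)]⟩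
  have hmΔ : m + 1 ≤ Δ := by
    have h1 : (m:ℤ) + 1 ≤ d i₀ - d (i₀ - n) := by linarith
    have h2 := hub i₀
    have : (m : ℤ) + 1 ≤ (Δ:ℤ) := by linarith
    exact_mod_cast this
  obtain ⟨x, hxD⟩ := hPΔ
  -- the witness path starting at x
  set z : ℕ → ℤ := fun t => wit^[t] x with hzdef
  have hzadd : ∀ s k : ℕ, z (s + k) = wit^[k] (z s) := by
    intro s k
    simp only [hzdef]
    rw [show s + k = k + s from Nat.add_comm s k, Function.iterate_add_apply]
  have hzle : ∀ s k : ℕ, z (s + k) ≤ z s - k ∧ w (z (s + k)) ≤ w (z s) - k := by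
    intro s k
    rw [hzadd]
    exact hple (z s) k
  have hzd : ∀ t : ℕ, d (z t) = d x - t := hpd x
  have hzsucc : ∀ t : ℕ, z (t + 1) = wit (z t) := by
    intro t
    simp only [hzdef]
    exact hiter x t
  have hDz : ∀ t : ℕ, d (z t) - d (z t - n) = (Δ : ℤ) := by
    intro t
    induction t with
    | zero => simpa [hzdef] using hxD
    | succ k ih =>
        rw [hzsucc]
        have h1 := hfact1 (z k)
        have h2 := hub (wit (z k))
        omega
  -- the antichain machine: m+1 pairwise-close balls on the path are impossible
  have hfam : ∀ (t₀ K : ℕ), m + 1 ≤ K →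
      (∀ v v' : ℕ, v < v' → v' < K →
        z (t₀ + v) - z (t₀ + v') < n ∧ w (z (t₀ + v)) - w (z (t₀ + v')) < n) → False := by
    intro t₀ K hK hpair
    have hpos : ∀ v v' : ℕ, v < v' →
        0 < z (t₀ + v) - z (t₀ + v') ∧ 0 < w (z (t₀ + v)) - w (z (t₀ + v')) := by
      intro v v' hvv'
      have h := hzle (t₀ + v) (v' - v)
      rw [show t₀ + v + (v' - v) = t₀ + v' by omega] at h
      have hc : (1:ℤ) ≤ ((v' - v : ℕ) : ℤ) := by
        exact_mod_cast Nat.one_le_iff_ne_zero.mpr (by omega)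
      exact ⟨by linarith [h.1], by linarith [h.2]⟩
    have hresne : ∀ a b : ℕ, a < b → b < K →
        resid n (z (t₀ + a)) ≠ resid n (z (t₀ + b)) := by
      intro a b hab hbK heq
      obtain ⟨qa, hqa⟩ := resid_rep (n := n) (z (t₀ + a))
      obtain ⟨qb, hqb⟩ := resid_rep (n := n) (z (t₀ + b))
      have hdvd : (n:ℤ) ∣ (z (t₀ + a) - z (t₀ + b)) := ⟨qa - qb, by rw [hqa, hqb, heq]; ring⟩
      have h5 := (hpos a b hab).1
      have h6 := (hpair a b hab hbK).1
      have := Int.le_of_dvd h5 hdvd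
      linarith
    set A : Finset ℤ := (Finset.range K).image (fun v => resid n (z (t₀ + v))) with hA
    have hinj : Set.InjOn (fun v => resid n (z (t₀ + v))) (Finset.range K) := by
      intro v hv v' hv' heq
      simp only [Finset.coe_range, Set.mem_Iio] at hv hv'
      by_contra hne
      rcases Nat.lt_or_ge v v' with hlt | hge
      · exact hresne v v' hlt hv' heq
      · exact hresne v' v (by omega) hv heq.symm
    have hcard : A.card = K := by
      rw [hA, Finset.card_image_of_injOn hinj, Finset.card_range]
    have hanti : IsShiAntichain n w A := by
      constructor
      · intro r hr
        simp only [hA, Finset.mem_image, Finset.mem_range] at hr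
        obtain ⟨v, hv, rfl⟩ := hr
        have := resid_mem hn (z (t₀ + v))
        simp only [Finset.mem_Icc]
        exact this
      · intro i hiA j hjA hij
        simp only [hA, Finset.mem_image, Finset.mem_range] at hiA hjA
        obtain ⟨v, hv, rfl⟩ := hiA
        obtain ⟨v', hv', rfl⟩ := hjA
        rcases Nat.lt_or_ge v v' with hlt | hge
        · have hp := hpair v v' hlt hv'
          have hq := hpos v v' hlt
          have h := alpha hn hper (z (t₀ + v')) (z (t₀ + v)) hq.1 hp.1 hq.2 hp.2
          exact ⟨h.2.2, h.2.1⟩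
        · have hlt' : v' < v := by
            rcases Nat.eq_or_lt_of_le hge with h | h
            · exact absurd (by rw [h]) hij
            · omega
          have hp := hpair v' v hlt' hv
          have hq := hpos v' v hlt'
          have h := alpha hn hper (z (t₀ + v)) (z (t₀ + v')) hq.1 hp.1 hq.2 hp.2
          exact ⟨h.2.1, h.2.2⟩
    have := hm.2 A hanti
    omega
  -- level bookkeeping
  have hlev : ∀ t : ℕ, d (z t - n) = d (z (t + Δ)) := by
    intro t
    have h1 := hDz t
    have h2 := hzd t
    have h3 := hzd (t + Δ)
    push_cast at h3
    omega
  by_cases hEQ : ∃ t : ℕ, z (t + Δ) = z t - n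
  · -- an adjacent collision: the Δ consecutive path balls are pairwise close
    obtain ⟨t, ht⟩ := hEQ
    apply hfam t Δ hmΔ
    intro v v' hvv' hv'
    have h1 := hzle t v
    have h2 := hzle (t + v') (Δ - v')
    rw [show t + v' + (Δ - v') = t + Δ by omega, ht] at h2
    have hc : ((Δ - v' : ℕ) : ℤ) = (Δ : ℤ) - (v' : ℤ) := by
      have : v' ≤ Δ := by omega
      push_cast [this]; ring
    rw [hc] at h2
    have hw : w (z t - n) = w (z t) - n := wsub (z t)
    rw [hw] at h2
    have hv'Δ : (v' : ℤ) + 1 ≤ (Δ : ℤ) := by exact_mod_cast hv'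
    constructor
    · have := h1.1
      have := h2.1
      have hvpos : (0:ℤ) ≤ (v:ℤ) := by positivity
      linarith
    · have := h1.2
      have := h2.2
      have hvpos : (0:ℤ) ≤ (v:ℤ) := by positivity
      linarith
  · push_neg at hEQ
    -- dichotomy: z (t+Δ) is strictly NE or strictly SW of z t - n
    have hside : ∀ t : ℕ, (z (t + Δ) < z t - n ∧ w (z t) - n < w (z (t + Δ))) ∨
        (z t - n < z (t + Δ) ∧ w (z (t + Δ)) < w (z t) - n) := by
      intro t
      have hne := hEQ t
      have hlev1 := (hlev t).symm
      rcases lt_trichotomy (z (t + Δ)) (z t - n) with h | h | h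
      · left
        refine ⟨h, ?_⟩
        by_contra hw
        push_neg at hw
        have hwlt : w (z (t + Δ)) < w (z t - n) := by
          have hw2 : w (z (t + Δ)) ≤ w (z t - n) := by rw [wsub]; exact hw
          rcases eq_or_lt_of_le hw2 with he | hl
          · exact absurd (winj he) hne
          · exact hl
        have := hmono _ _ h hwlt
        omega
      · exact absurd h hne
      · right
        refine ⟨h, ?_⟩
        by_contra hw
        push_neg at hw
        have hwlt : w (z t - n) < w (z (t + Δ)) := by
          have hw2 : w (z t - n) ≤ w (z (t + Δ)) := by rw [wsub]; exact hw
          rcases eq_or_lt_of_le hw2 with he | hl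
          · exact absurd (winj he.symm) hne
          · exact hl
        have := hmono _ _ h hwlt
        omega
    set NE : ℕ → Prop := fun t => z (t + Δ) < z t - n ∧ w (z t) - n < w (z (t + Δ)) with hNEdef
    set SW : ℕ → Prop := fun t => z t - n < z (t + Δ) ∧ w (z (t + Δ)) < w (z t) - n with hSWdef
    have hside' : ∀ t : ℕ, NE t ∨ SW t := hside
    have hNEstep : ∀ t : ℕ, NE t → NE (t + 1) := by
      intro t hne
      have hcols : ∀ v v' : ℕ, v < v' → v' < m + 1 →
          w (z (t + 1 + v)) - w (z (t + 1 + v')) < n := by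
        intro v v' hvv' hv'
        have hup := (hzle t (1 + v)).2
        rw [show t + (1 + v) = t + 1 + v by omega] at hup
        have h1v' : 1 + v' ≤ Δ := by omega
        have hdn := (hzle (t + 1 + v') (Δ - (1 + v'))).2
        rw [show t + 1 + v' + (Δ - (1 + v')) = t + Δ by omega] at hdn
        have hlow := hne.2
        have hc1 : ((1 + v : ℕ) : ℤ) = 1 + (v : ℤ) := by push_cast; ring
        have hc2 : (0:ℤ) ≤ ((Δ - (1 + v') : ℕ) : ℤ) := by positivity
        rw [hc1] at hup
        have hvpos : (0:ℤ) ≤ (v:ℤ) := by positivity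
        linarith
      by_cases hrows : ∀ v v' : ℕ, v < v' → v' < m + 1 →
          z (t + 1 + v) - z (t + 1 + v') < n
      · exact absurd (hfam (t + 1) (m + 1) le_rfl
          (fun v v' h h' => ⟨hrows v v' h h', hcols v v' h h'⟩)) (by simp)
      · push_neg at hrows
        obtain ⟨v, v', hvv', hv', hge⟩ := hrows
        have hgt : (n:ℤ) < z (t + 1 + v) - z (t + 1 + v') := by
          rcases eq_or_lt_of_le hge with he | h
          · exfalso
            have hb : z (t + 1 + v') = z (t + 1 + v) - n := by linarith
            have hwb : w (z (t + 1 + v')) = w (z (t + 1 + v)) - n := by rw [hb, wsub]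
            have := hcols v v' hvv' hv'
            linarith
          · exact h
        have hR : z (t + 1 + Δ) < z (t + 1) - n := by
          have hv'Δ : v' ≤ Δ := by omega
          have h1 := (hzle (t + 1 + v') (Δ - v')).1
          rw [show t + 1 + v' + (Δ - v') = t + 1 + Δ by omega] at h1
          have h2 := (hzle (t + 1) v).1
          have hc1 : (1:ℤ) ≤ ((Δ - v' : ℕ) : ℤ) := by
            exact_mod_cast Nat.one_le_iff_ne_zero.mpr (by omega)
          have hvpos : (0:ℤ) ≤ (v:ℤ) := by positivity
          linarith
        rcases hside' (t + 1) with h | h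
        · exact h
        · exact absurd h.1 (by linarith)
    have hSWstep : ∀ t : ℕ, SW t → SW (t + 1) := by
      intro t hsw
      have hrows : ∀ v v' : ℕ, v < v' → v' < m + 1 →
          z (t + 1 + v) - z (t + 1 + v') < n := by
        intro v v' hvv' hv'
        have hup := (hzle t (1 + v)).1
        rw [show t + (1 + v) = t + 1 + v by omega] at hup
        have h1v' : 1 + v' ≤ Δ := by omega
        have hdn := (hzle (t + 1 + v') (Δ - (1 + v'))).1
        rw [show t + 1 + v' + (Δ - (1 + v')) = t + Δ by omega] at hdn
        have hlow := hsw.1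
        have hc1 : ((1 + v : ℕ) : ℤ) = 1 + (v : ℤ) := by push_cast; ring
        have hc2 : (0:ℤ) ≤ ((Δ - (1 + v') : ℕ) : ℤ) := by positivity
        rw [hc1] at hup
        have hvpos : (0:ℤ) ≤ (v:ℤ) := by positivity
        linarith
      by_cases hcols : ∀ v v' : ℕ, v < v' → v' < m + 1 →
          w (z (t + 1 + v)) - w (z (t + 1 + v')) < n
      · exact absurd (hfam (t + 1) (m + 1) le_rfl
          (fun v v' h h' => ⟨hrows v v' h h', hcols v v' h h'⟩)) (by simp)
      · push_neg at hcols
        obtain ⟨v, v', hvv', hv', hge⟩ := hcols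
        have hgt : (n:ℤ) < w (z (t + 1 + v)) - w (z (t + 1 + v')) := by
          rcases eq_or_lt_of_le hge with he | h
          · exfalso
            have hwb : w (z (t + 1 + v')) = w (z (t + 1 + v) - n) := by
              rw [wsub]; linarith
            have hb : z (t + 1 + v') = z (t + 1 + v) - n := winj hwb
            have := hrows v v' hvv' hv'
            linarith
          · exact h
        have hC : w (z (t + 1 + Δ)) < w (z (t + 1)) - n := by
          have hv'Δ : v' ≤ Δ := by omega
          have h1 := (hzle (t + 1 + v') (Δ - v')).2
          rw [show t + 1 + v' + (Δ - v') = t + 1 + Δ by omega] at h1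
          have h2 := (hzle (t + 1) v).2
          have hc1 : (1:ℤ) ≤ ((Δ - v' : ℕ) : ℤ) := by
            exact_mod_cast Nat.one_le_iff_ne_zero.mpr (by omega)
          have hvpos : (0:ℤ) ≤ (v:ℤ) := by positivity
          linarith
        rcases hside' (t + 1) with h | h
        · exact absurd h.2 (by linarith)
        · exact h
    have hNEall : NE 0 → ∀ t, NE t := by
      intro h0 t
      induction t with
      | zero => exact h0
      | succ k ih => exact hNEstep k ih
    have hSWall : SW 0 → ∀ t, SW t := by
      intro h0 t
      induction t with
      | zero => exact h0
      | succ k ih => exact hSWstep k ih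
    -- pigeonhole: a collision z t' = z t - K*n
    have hpig : ∃ t t' : ℕ, t < t' ∧ (n:ℤ) ∣ (z t - z t') := by
      have hmap : ∀ v ∈ Finset.range (n + 1), (z v % n).toNat ∈ Finset.range n := by
        intro v _
        have h1 := Int.emod_nonneg (z v) (show (n:ℤ) ≠ 0 by exact_mod_cast hn.ne')
        have h2 := Int.emod_lt_of_pos (z v) hnZ
        simp only [Finset.mem_range]
        omega
      have hcard : (Finset.range n).card < (Finset.range (n + 1)).card := by simp
      obtain ⟨a, ha, b, hb, hab, heq⟩ :=
        Finset.exists_ne_map_eq_of_card_lt_of_maps_to hcard hmap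
      have h1 := Int.emod_nonneg (z a) (show (n:ℤ) ≠ 0 by exact_mod_cast hn.ne')
      have h2 := Int.emod_nonneg (z b) (show (n:ℤ) ≠ 0 by exact_mod_cast hn.ne')
      have hmod : z a % n = z b % n := by omega
      have hdvd : (n:ℤ) ∣ (z a - z b) := by
        have h3 : (z a - z b) % n = 0 := by
          rw [Int.sub_emod, hmod, sub_self, Int.zero_emod]
        exact Int.dvd_of_emod_eq_zero h3
      rcases Nat.lt_or_ge a b with h | h
      · exact ⟨a, b, h, hdvd⟩
      · have hba : b < a := by omega
        exact ⟨b, a, hba, (dvd_sub_comm).mp hdvd⟩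
    obtain ⟨t, t', htt', hdvd⟩ := hpig
    obtain ⟨c, hc⟩ := hdvd
    have hdiffpos : (0:ℤ) < z t - z t' := by
      have h := (hzle t (t' - t)).1
      rw [show t + (t' - t) = t' by omega] at h
      have hcc : (1:ℤ) ≤ ((t' - t : ℕ) : ℤ) := by
        exact_mod_cast Nat.one_le_iff_ne_zero.mpr (by omega)
      linarith
    have hcpos : 0 < c := by nlinarith
    set K : ℕ := c.toNat with hKdef
    have hKc : (K : ℤ) = c := Int.toNat_of_nonneg hcpos.le
    have hzt' : z t' = z t - K * n := by rw [hKc]; linarith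
    have hwzt' : w (z t') = w (z t) - K * n := by
      have h := wper_mul hper (-(K:ℤ)) (z t)
      rw [show z t + (-(K:ℤ)) * n = z t - K * n by ring] at h
      rw [hzt', h]; ring
    have hK1 : 1 ≤ K := by omega
    have htower_d : ∀ i : ℕ, d (z t - i * n) ≤ d (z t) := by
      intro i
      rcases Nat.eq_zero_or_pos i with h0 | h0
      · subst h0; simp
      · have hin : (1:ℤ) ≤ (i:ℤ) := by exact_mod_cast h0
        have hlt : z t - i * n < z t := by nlinarith
        have hw' : w (z t - i * n) = w (z t) - i * n := by
          have h := wper_mul hper (-(i:ℤ)) (z t)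
          rw [show z t + (-(i:ℤ)) * n = z t - i * n by ring] at h
          rw [h]; ring
        have hwlt : w (z t - i * n) < w (z t) := by rw [hw']; nlinarith
        exact (hmono _ _ hlt hwlt).le
    have hdnonneg : ∀ i : ℕ, 0 ≤ d x - d (z t - i * n) := by
      intro i
      have h1 := htower_d i
      have h2 := hzd t
      have h3 : (0:ℤ) ≤ t := by positivity
      linarith
    set sIdx : ℕ → ℕ := fun i => (d x - d (z t - i * n)).toNat with hsIdxdef
    have hsIdxval : ∀ i : ℕ, (sIdx i : ℤ) = d x - d (z t - i * n) :=
      fun i => Int.toNat_of_nonneg (hdnonneg i)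
    have hs0 : sIdx 0 = t := by
      have h := hsIdxval 0
      have h2 := hzd t
      simp only [Nat.cast_zero, zero_mul, sub_zero] at h
      omega
    have hsK : sIdx K = t' := by
      have h := hsIdxval K
      rw [← hzt'] at h
      have h2 := hzd t'
      omega
    have hstep : ∀ i : ℕ, (sIdx (i+1) : ℤ) =
        (sIdx i : ℤ) + (d (z t - i * n) - d ((z t - i * n) - n)) := by
      intro i
      rw [hsIdxval, hsIdxval]
      have he : z t - ((i:ℕ)+1 : ℕ) * n = (z t - i * n) - n := by push_cast; ring
      rw [he]
      ring
    have hstepΔ : ∀ i : ℕ, sIdx (i + 1) ≤ sIdx i + Δ := by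
      intro i
      have h1 := hstep i
      have h2 := hub (z t - i * n)
      omega
    rcases hside' 0 with h0 | h0
    · have hNE := hNEall h0
      have hsum : ∀ i : ℕ, w (z t) - w (z (sIdx i)) ≤ (i : ℤ) * ((n:ℤ) - 1) := by
        intro i
        induction i with
        | zero => simp [hs0]
        | succ k ih =>
            have hnek := hNE (sIdx k)
            have hle : sIdx (k + 1) ≤ sIdx k + Δ := hstepΔ k
            have hmono2 : w (z (sIdx k + Δ)) ≤ w (z (sIdx (k+1))) := by
              have h := (hzle (sIdx (k+1)) (sIdx k + Δ - sIdx (k+1))).2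
              rw [show sIdx (k+1) + (sIdx k + Δ - sIdx (k+1)) = sIdx k + Δ by omega] at h
              have hcc : (0:ℤ) ≤ ((sIdx k + Δ - sIdx (k+1) : ℕ) : ℤ) := by positivity
              linarith
            have hcol := hnek.2
            push_cast
            push_cast at ih
            linarith
      have hfin := hsum K
      rw [hsK, hwzt'] at hfin
      have hK1' : (1:ℤ) ≤ (K:ℤ) := by exact_mod_cast hK1
      nlinarith
    · have hSW := hSWall h0
      have hsum : ∀ i : ℕ, z t - z (sIdx i) ≤ (i : ℤ) * ((n:ℤ) - 1) := by
        intro i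
        induction i with
        | zero => simp [hs0]
        | succ k ih =>
            have hswk := hSW (sIdx k)
            have hle : sIdx (k + 1) ≤ sIdx k + Δ := hstepΔ k
            have hmono2 : z (sIdx k + Δ) ≤ z (sIdx (k+1)) := by
              have h := (hzle (sIdx (k+1)) (sIdx k + Δ - sIdx (k+1))).1
              rw [show sIdx (k+1) + (sIdx k + Δ - sIdx (k+1)) = sIdx k + Δ by omega] at h
              have hcc : (0:ℤ) ≤ ((sIdx k + Δ - sIdx (k+1) : ℕ) : ℤ) := by positivity
              linarith
            have hrow := hswk.1
            push_cast
            push_cast at ih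
            linarith
      have hfin := hsum K
      rw [hsK, hzt'] at hfin
      have hK1' : (1:ℤ) ≤ (K:ℤ) := by exact_mod_cast hK1
      nlinarith
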